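/- Let d ≥ 1 and L ≥ 1. Let φ^1, …, φ^L ∈ L²(ℝ^d). For each ℓ ∈ {1,…,L}, let (h_n^ℓ)_{n∈ℕ} be a sequence of positive reals (a scale) and (κ_n^ℓ)_{n∈ℕ} a sequence in ℝ^d (a concentration core). Assume pairwise orthogonality: for all ℓ ≠ ℓ', either |log(h_n^ℓ / h_n^{ℓ'})| → ∞ as n → ∞, or (h_n^ℓ = h_n^{ℓ'} for all n and |κ_n^ℓ − κ_n^{ℓ'}| / h_n^ℓ → ∞ as n → ∞). Then ‖∑_{ℓ=1}^L (h_n^ℓ)^{-d/2} φ^ℓ((· − κ_n^ℓ)/h_n^ℓ)‖²_{L²(ℝ^d)} → ∑_{ℓ=1}^L ‖φ^ℓ‖²_{L²(ℝ^d)} as n → ∞. -/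

import Mathlib

open MeasureTheory
open scoped Topology

namespace AlmOrth

noncomputable section

variable {d : ℕ}

/-- The rescaling operator `f ↦ a^{-d/2} f(a⁻¹(· - b))` acting on functions on `ℝ^d`. -/
def resc (d : ℕ) (a : ℝ) (b : EuclideanSpace ℝ (Fin d)) (f : EuclideanSpace ℝ (Fin d) → ℂ) :
    EuclideanSpace ℝ (Fin d) → ℂ :=
  fun x => ((a ^ (-(d : ℝ)/2) : ℝ) : ℂ) * f (a⁻¹ • (x - b))

theorem integral_comp_aff {F : Type*} [NormedAddCommGroup F] [NormedSpace ℝ F]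
    (f : EuclideanSpace ℝ (Fin d) → F) {a : ℝ} (ha : 0 < a) (b : EuclideanSpace ℝ (Fin d)) :
    ∫ x, f (a⁻¹ • (x - b)) = (a ^ d) • ∫ x, f x := by
  have h1 : ∫ x : EuclideanSpace ℝ (Fin d), f (a⁻¹ • (x - b))
      = ∫ x : EuclideanSpace ℝ (Fin d), f (a⁻¹ • x) := by
    rw [← integral_add_right_eq_self (fun x : EuclideanSpace ℝ (Fin d) => f (a⁻¹ • (x - b))) b]
    simp
  rw [h1, MeasureTheory.Measure.integral_comp_smul volume f a⁻¹]
  congr 1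
  rw [finrank_euclideanSpace_fin, ← inv_pow, inv_inv, abs_of_pos (pow_pos ha d)]

theorem memℒp_resc {f : EuclideanSpace ℝ (Fin d) → ℂ}
    (hf : MemLp f 2 (volume : Measure (EuclideanSpace ℝ (Fin d))))
    {a : ℝ} (ha : 0 < a) (b : EuclideanSpace ℝ (Fin d)) :
    MemLp (resc d a b f) 2 (volume : Measure (EuclideanSpace ℝ (Fin d))) := by
  have hTc : Continuous (fun x : EuclideanSpace ℝ (Fin d) => a⁻¹ • (x - b)) :=
    (continuous_const_smul _).comp (continuous_id.sub continuous_const)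
  have hT : Measure.map (fun x : EuclideanSpace ℝ (Fin d) => a⁻¹ • (x - b)) volume
      = (ENNReal.ofReal (a ^ d)) • volume := by
    have h1 : (fun x : EuclideanSpace ℝ (Fin d) => a⁻¹ • (x - b))
        = (fun x : EuclideanSpace ℝ (Fin d) => a⁻¹ • x)
          ∘ (fun x : EuclideanSpace ℝ (Fin d) => x - b) := rfl
    rw [h1, ← Measure.map_map (g := fun x : EuclideanSpace ℝ (Fin d) => a⁻¹ • x)
      (f := fun x : EuclideanSpace ℝ (Fin d) => x - b) (by fun_prop) (by fun_prop),
      (measurePreserving_sub_right volume b).map_eq,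
      Measure.map_addHaar_smul volume (inv_ne_zero ha.ne')]
    congr 1
    rw [finrank_euclideanSpace_fin, ← inv_pow, inv_inv, abs_of_pos (pow_pos ha d)]
  have h2 : MemLp f 2 (Measure.map (fun x : EuclideanSpace ℝ (Fin d) => a⁻¹ • (x - b)) volume) := by
    rw [hT]; exact hf.smul_measure ENNReal.ofReal_ne_top
  have h3 := (memLp_map_measure_iff h2.aestronglyMeasurable hTc.measurable.aemeasurable).mp h2
  exact h3.const_mul _

theorem integral_eq_aff {F : Type*} [NormedAddCommGroup F] [NormedSpace ℝ F]
    (f : EuclideanSpace ℝ (Fin d) → F) {a : ℝ} (ha : 0 < a) (b : EuclideanSpace ℝ (Fin d)) :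
    ∫ x, f x = (a ^ d) • ∫ y, f (a • y + b) := by
  have h := integral_comp_aff (fun y => f (a • y + b)) ha b
  simpa [smul_inv_smul₀ ha.ne', sub_add_cancel] using h

theorem scalar_id {a a' : ℝ} (ha : 0 < a) (ha' : 0 < a') :
    (a ^ d) * (a ^ (-(d : ℝ)/2)) * (a' ^ (-(d : ℝ)/2)) = (a'/a) ^ (-(d : ℝ)/2) := by
  have h1 : (a'/a : ℝ) ^ (-(d : ℝ)/2) = a' ^ (-(d : ℝ)/2) * a ^ ((d : ℝ)/2) := by
    rw [div_eq_mul_inv, Real.mul_rpow ha'.le (inv_nonneg.mpr ha.le),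
      Real.inv_rpow ha.le, ← Real.rpow_neg ha.le]
    ring_nf
  rw [h1]
  have h2 : (a : ℝ) ^ d = a ^ (d : ℝ) := (Real.rpow_natCast a d).symm
  rw [h2, ← Real.rpow_add ha]
  rw [show (d : ℝ) + -(d : ℝ)/2 = (d : ℝ)/2 by ring]
  ring

-- argument identity

theorem arg_id {a a' : ℝ} (ha : 0 < a) (ha' : 0 < a') (b b' y : EuclideanSpace ℝ (Fin d)) :
    a'⁻¹ • (a • y + b - b') = (a'/a)⁻¹ • (y - a⁻¹ • (b' - b)) := by
  ext i
  simp only [PiLp.smul_apply, PiLp.add_apply, PiLp.sub_apply, smul_eq_mul]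
  field_simp
  ring

theorem integral_inner_resc {f g : EuclideanSpace ℝ (Fin d) → ℂ}
    {a a' : ℝ} (ha : 0 < a) (ha' : 0 < a') (b b' : EuclideanSpace ℝ (Fin d)) :
    ∫ x, (starRingEnd ℂ) (resc d a b f x) * resc d a' b' g x
      = ∫ y, (starRingEnd ℂ) (f y) * resc d (a'/a) (a⁻¹ • (b' - b)) g y := by
  rw [integral_eq_aff (fun x => (starRingEnd ℂ) (resc d a b f x) * resc d a' b' g x) ha b]
  rw [← integral_smul]
  congr 1
  funext y
  simp only [resc]
  rw [add_sub_cancel_right, inv_smul_smul₀ ha.ne', arg_id ha ha' b b' y]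
  have hc : ((a ^ d : ℝ) : ℂ) * ((a ^ (-(d : ℝ)/2) : ℝ) : ℂ) * ((a' ^ (-(d : ℝ)/2) : ℝ) : ℂ)
      = (((a'/a) ^ (-(d : ℝ)/2) : ℝ) : ℂ) := by
    rw [← Complex.ofReal_mul, ← Complex.ofReal_mul, scalar_id ha ha']
  rw [map_mul, Complex.conj_ofReal, Complex.real_smul]
  push_cast [Complex.ofReal_pow] at hc ⊢
  linear_combination (g ((a' / a)⁻¹ • (y - a⁻¹ • (b' - b))) * (starRingEnd ℂ) (f y)) * hc

theorem resc_one_zero (f : EuclideanSpace ℝ (Fin d) → ℂ) : resc d 1 0 f = f := by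
  funext x
  simp [resc, Real.one_rpow]

theorem inner_toLp_eq {f g : EuclideanSpace ℝ (Fin d) → ℂ}
    (hf : MemLp f 2 (volume : Measure (EuclideanSpace ℝ (Fin d))))
    (hg : MemLp g 2 (volume : Measure (EuclideanSpace ℝ (Fin d)))) :
    (inner ℂ (hf.toLp f) (hg.toLp g) : ℂ) = ∫ x, (starRingEnd ℂ) (f x) * g x := by
  rw [L2.inner_def]
  apply integral_congr_ae
  filter_upwards [hf.coeFn_toLp, hg.coeFn_toLp] with x h1 h2
  rw [h1, h2, RCLike.inner_apply, mul_comm]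

theorem inner_toLp_resc {f g : EuclideanSpace ℝ (Fin d) → ℂ}
    (hf : MemLp f 2 (volume : Measure (EuclideanSpace ℝ (Fin d))))
    (hg : MemLp g 2 (volume : Measure (EuclideanSpace ℝ (Fin d))))
    {a a' : ℝ} (ha : 0 < a) (ha' : 0 < a') (b b' : EuclideanSpace ℝ (Fin d)) :
    (inner ℂ ((memℒp_resc hf ha b).toLp (resc d a b f))
        ((memℒp_resc hg ha' b').toLp (resc d a' b' g)) : ℂ)
      = ∫ y, (starRingEnd ℂ) (f y) * resc d (a'/a) (a⁻¹ • (b' - b)) g y := by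
  rw [inner_toLp_eq, integral_inner_resc ha ha' b b']

theorem inner_toLp_resc_self {f g : EuclideanSpace ℝ (Fin d) → ℂ}
    (hf : MemLp f 2 (volume : Measure (EuclideanSpace ℝ (Fin d))))
    (hg : MemLp g 2 (volume : Measure (EuclideanSpace ℝ (Fin d))))
    {a : ℝ} (ha : 0 < a) (b : EuclideanSpace ℝ (Fin d)) :
    (inner ℂ ((memℒp_resc hf ha b).toLp (resc d a b f))
        ((memℒp_resc hg ha b).toLp (resc d a b g)) : ℂ)
      = inner ℂ (hf.toLp f) (hg.toLp g) := by
  rw [inner_toLp_resc hf hg ha ha b b, inner_toLp_eq]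
  congr 1
  funext y
  rw [div_self ha.ne', sub_self, smul_zero, resc_one_zero]

theorem norm_toLp_resc {f : EuclideanSpace ℝ (Fin d) → ℂ}
    (hf : MemLp f 2 (volume : Measure (EuclideanSpace ℝ (Fin d))))
    {a : ℝ} (ha : 0 < a) (b : EuclideanSpace ℝ (Fin d)) :
    ‖(memℒp_resc hf ha b).toLp (resc d a b f)‖ = ‖hf.toLp f‖ := by
  have h1 := norm_sq_eq_re_inner (𝕜 := ℂ) ((memℒp_resc hf ha b).toLp (resc d a b f))
  rw [inner_toLp_resc_self hf hf ha b, ← norm_sq_eq_re_inner (𝕜 := ℂ)] at h1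
  nlinarith [norm_nonneg ((memℒp_resc hf ha b).toLp (resc d a b f)), norm_nonneg (hf.toLp f)]

theorem norm_resc_integrand (g g' : EuclideanSpace ℝ (Fin d) → ℂ) {a : ℝ} (ha : 0 < a)
    (b x : EuclideanSpace ℝ (Fin d)) :
    ‖(starRingEnd ℂ) (g x) * resc d a b g' x‖
      = ‖g x‖ * ((a ^ (-(d : ℝ)/2)) * ‖g' (a⁻¹ • (x - b))‖) := by
  simp only [resc, norm_mul, RCLike.norm_conj, Complex.norm_real, Real.norm_eq_abs,
    abs_of_pos (Real.rpow_pos_of_pos ha _)]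

theorem boundA {g g' : EuclideanSpace ℝ (Fin d) → ℂ} {C' : ℝ} (hC' : ∀ x, ‖g' x‖ ≤ C')
    (Ig : Integrable g (volume : Measure (EuclideanSpace ℝ (Fin d))))
    {a : ℝ} (ha : 0 < a) (b : EuclideanSpace ℝ (Fin d)) :
    ‖∫ x, (starRingEnd ℂ) (g x) * resc d a b g' x‖
      ≤ (a ^ (-(d : ℝ)/2)) * (C' * ∫ x, ‖g x‖) := by
  calc ‖∫ x, (starRingEnd ℂ) (g x) * resc d a b g' x‖
      ≤ ∫ x, ‖(starRingEnd ℂ) (g x) * resc d a b g' x‖ := norm_integral_le_integral_norm _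
    _ ≤ ∫ x, ‖g x‖ * ((a ^ (-(d : ℝ)/2)) * C') := by
        apply integral_mono_of_nonneg
        · filter_upwards with x; positivity
        · exact Ig.norm.mul_const _
        · filter_upwards with x
          rw [norm_resc_integrand g g' ha b x]
          have h0 : (0:ℝ) ≤ a ^ (-(d : ℝ)/2) := (Real.rpow_pos_of_pos ha _).le
          gcongr
          exact hC' _
    _ = (a ^ (-(d : ℝ)/2)) * (C' * ∫ x, ‖g x‖) := by
        rw [integral_mul_const]; ring

theorem boundB {g g' : EuclideanSpace ℝ (Fin d) → ℂ} {Cg : ℝ} (hCg : ∀ x, ‖g x‖ ≤ Cg)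
    (Ig' : Integrable g' (volume : Measure (EuclideanSpace ℝ (Fin d))))
    {a : ℝ} (ha : 0 < a) (b : EuclideanSpace ℝ (Fin d)) :
    ‖∫ x, (starRingEnd ℂ) (g x) * resc d a b g' x‖
      ≤ (a ^ ((d : ℝ)/2)) * (Cg * ∫ x, ‖g' x‖) := by
  have key : ∫ x, ‖(starRingEnd ℂ) (g x) * resc d a b g' x‖
      = (a ^ d) • ∫ y, ‖(starRingEnd ℂ) (g (a • y + b)) * resc d a b g' (a • y + b)‖ :=
    integral_eq_aff _ ha b
  calc ‖∫ x, (starRingEnd ℂ) (g x) * resc d a b g' x‖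
      ≤ ∫ x, ‖(starRingEnd ℂ) (g x) * resc d a b g' x‖ := norm_integral_le_integral_norm _
    _ = (a ^ d) * ∫ y, ‖(starRingEnd ℂ) (g (a • y + b)) * resc d a b g' (a • y + b)‖ := by
        rw [key, smul_eq_mul]
    _ ≤ (a ^ d) * ∫ y, Cg * ((a ^ (-(d : ℝ)/2)) * ‖g' y‖) := by
        apply mul_le_mul_of_nonneg_left _ (pow_pos ha d).le
        apply integral_mono_of_nonneg
        · filter_upwards with y; positivity
        · exact (Ig'.norm.const_mul _).const_mul _
        · filter_upwards with y
          rw [norm_resc_integrand g g' ha b (a • y + b)]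
          have harg : a⁻¹ • (a • y + b - b) = y := by
            rw [add_sub_cancel_right, inv_smul_smul₀ ha.ne']
          rw [harg]
          have h0 : (0:ℝ) ≤ a ^ (-(d : ℝ)/2) := (Real.rpow_pos_of_pos ha _).le
          gcongr
          exact hCg _
    _ = (a ^ ((d : ℝ)/2)) * (Cg * ∫ x, ‖g' x‖) := by
        rw [integral_const_mul, integral_const_mul]
        have h2 : (a : ℝ) ^ d * a ^ (-(d : ℝ)/2) = a ^ ((d : ℝ)/2) := by
          rw [← Real.rpow_natCast a d, ← Real.rpow_add ha,
            show (d : ℝ) + -(d : ℝ)/2 = (d : ℝ)/2 by ring]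
        calc (a:ℝ) ^ d * (Cg * ((a ^ (-(d : ℝ)/2)) * ∫ x, ‖g' x‖))
            = ((a:ℝ) ^ d * a ^ (-(d : ℝ)/2)) * (Cg * ∫ x, ‖g' x‖) := by ring
          _ = (a ^ ((d : ℝ)/2)) * (Cg * ∫ x, ‖g' x‖) := by rw [h2]

theorem bound_exp {g g' : EuclideanSpace ℝ (Fin d) → ℂ} {Cg C' : ℝ}
    (hCg : ∀ x, ‖g x‖ ≤ Cg) (hC' : ∀ x, ‖g' x‖ ≤ C')
    (Ig : Integrable g (volume : Measure (EuclideanSpace ℝ (Fin d))))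
    (Ig' : Integrable g' (volume : Measure (EuclideanSpace ℝ (Fin d))))
    {a : ℝ} (ha : 0 < a) (b : EuclideanSpace ℝ (Fin d)) :
    ‖∫ x, (starRingEnd ℂ) (g x) * resc d a b g' x‖
      ≤ (max (C' * ∫ x, ‖g x‖) (Cg * ∫ x, ‖g' x‖)) * Real.exp (-((d : ℝ)/2) * |Real.log a|) := by
  rcases le_or_gt 0 (Real.log a) with hl | hl
  · have he : a ^ (-(d : ℝ)/2) = Real.exp (-((d : ℝ)/2) * |Real.log a|) := by
      rw [abs_of_nonneg hl, Real.rpow_def_of_pos ha]; ring_nf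
    calc ‖∫ x, (starRingEnd ℂ) (g x) * resc d a b g' x‖
        ≤ (a ^ (-(d : ℝ)/2)) * (C' * ∫ x, ‖g x‖) := boundA hC' Ig ha b
      _ ≤ (a ^ (-(d : ℝ)/2)) * (max (C' * ∫ x, ‖g x‖) (Cg * ∫ x, ‖g' x‖)) :=
          mul_le_mul_of_nonneg_left (le_max_left _ _) (Real.rpow_pos_of_pos ha _).le
      _ = _ := by rw [he]; ring
  · have he : a ^ ((d : ℝ)/2) = Real.exp (-((d : ℝ)/2) * |Real.log a|) := by
      rw [abs_of_neg hl, Real.rpow_def_of_pos ha]; ring_nf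
    calc ‖∫ x, (starRingEnd ℂ) (g x) * resc d a b g' x‖
        ≤ (a ^ ((d : ℝ)/2)) * (Cg * ∫ x, ‖g' x‖) := boundB hCg Ig' ha b
      _ ≤ (a ^ ((d : ℝ)/2)) * (max (C' * ∫ x, ‖g x‖) (Cg * ∫ x, ‖g' x‖)) :=
          mul_le_mul_of_nonneg_left (le_max_right _ _) (Real.rpow_pos_of_pos ha _).le
      _ = _ := by rw [he]; ring

theorem tendsto_compact (hd : 1 ≤ d) {g g' : EuclideanSpace ℝ (Fin d) → ℂ}
    (hgc : Continuous g) (hgs : HasCompactSupport g)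
    (hgc' : Continuous g') (hgs' : HasCompactSupport g')
    {a : ℕ → ℝ} (ha : ∀ n, 0 < a n) {b : ℕ → EuclideanSpace ℝ (Fin d)}
    (hyp : Filter.Tendsto (fun n => |Real.log (a n)|) Filter.atTop Filter.atTop ∨
      ((∀ n, a n = 1) ∧ Filter.Tendsto (fun n => ‖b n‖) Filter.atTop Filter.atTop)) :
    Filter.Tendsto (fun n => ∫ x, (starRingEnd ℂ) (g x) * resc d (a n) (b n) g' x)
      Filter.atTop (𝓝 0) := by
  rcases hyp with hyp | ⟨haeq, hbt⟩
  · -- scales separate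
    obtain ⟨x₀, hx₀⟩ := (hgc.norm).exists_forall_ge_of_hasCompactSupport hgs.norm
    obtain ⟨x₁, hx₁⟩ := (hgc'.norm).exists_forall_ge_of_hasCompactSupport hgs'.norm
    have Ig : Integrable g volume := hgc.integrable_of_hasCompactSupport hgs
    have Ig' : Integrable g' volume := hgc'.integrable_of_hasCompactSupport hgs'
    set M : ℝ := max (‖g' x₁‖ * ∫ x, ‖g x‖) (‖g x₀‖ * ∫ x, ‖g' x‖) with hM
    apply squeeze_zero_norm
      (fun n => bound_exp hx₀ hx₁ Ig Ig' (ha n) (b n))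
    have h1 : Filter.Tendsto (fun n => -((d : ℝ)/2) * |Real.log (a n)|)
        Filter.atTop Filter.atBot := by
      apply Filter.Tendsto.const_mul_atTop_of_neg _ hyp
      have : (0:ℝ) < (d : ℝ) := by exact_mod_cast Nat.lt_of_lt_of_le Nat.zero_lt_one hd
      linarith
    have h2 : Filter.Tendsto (fun n => Real.exp (-((d : ℝ)/2) * |Real.log (a n)|))
        Filter.atTop (𝓝 0) := Real.tendsto_exp_atBot.comp h1
    have := h2.const_mul M
    simpa using this
  · -- cores separate
    obtain ⟨R, hR⟩ := hgs.isBounded.subset_closedBall 0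
    obtain ⟨R', hR'⟩ := hgs'.isBounded.subset_closedBall 0
    set S : ℝ := max R R' with hS
    have hgsub : tsupport g ⊆ Metric.closedBall 0 S :=
      hR.trans (Metric.closedBall_subset_closedBall (le_max_left _ _))
    have hgsub' : tsupport g' ⊆ Metric.closedBall 0 S :=
      hR'.trans (Metric.closedBall_subset_closedBall (le_max_right _ _))
    have hev : ∀ᶠ n in Filter.atTop,
        (fun x => (starRingEnd ℂ) (g x) * resc d (a n) (b n) g' x) = (fun _ => (0:ℂ)) := by
      filter_upwards [hbt.eventually (Filter.eventually_gt_atTop (2 * S))] with n hn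
      funext x
      by_cases hx : x ∈ tsupport g
      · have hxS : ‖x‖ ≤ S := by simpa using hgsub hx
        have hzero : g' ((a n)⁻¹ • (x - b n)) = 0 := by
          rw [haeq n]
          simp only [inv_one, one_smul]
          apply image_eq_zero_of_notMem_tsupport
          intro hmem
          have h5 : ‖x - b n‖ ≤ S := by
            have h6 := hgsub' hmem
            rwa [Metric.mem_closedBall, dist_zero_right] at h6
          have hb : ‖b n‖ ≤ ‖x‖ + ‖x - b n‖ := by
            have h7 := norm_sub_le x (x - b n)
            rwa [sub_sub_cancel] at h7
          linarith
        simp [resc, hzero]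
      · simp [image_eq_zero_of_notMem_tsupport hx]
    have hzero' : (fun _ : ℕ => (0:ℂ)) =ᶠ[Filter.atTop]
        fun n => ∫ x, (starRingEnd ℂ) (g x) * resc d (a n) (b n) g' x := by
      filter_upwards [hev] with n hn
      rw [hn]
      simp
    exact Filter.Tendsto.congr' hzero' tendsto_const_nhds

theorem resc_sub (a : ℝ) (b : EuclideanSpace ℝ (Fin d)) (f g : EuclideanSpace ℝ (Fin d) → ℂ) :
    resc d a b (f - g) = resc d a b f - resc d a b g := by
  funext x
  simp [resc, mul_sub]

theorem tendsto_inner_resc (hd : 1 ≤ d) {f f' : EuclideanSpace ℝ (Fin d) → ℂ}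
    (hf : MemLp f 2 (volume : Measure (EuclideanSpace ℝ (Fin d))))
    (hf' : MemLp f' 2 (volume : Measure (EuclideanSpace ℝ (Fin d))))
    {a : ℕ → ℝ} (ha : ∀ n, 0 < a n) {b : ℕ → EuclideanSpace ℝ (Fin d)}
    (hyp : Filter.Tendsto (fun n => |Real.log (a n)|) Filter.atTop Filter.atTop ∨
      ((∀ n, a n = 1) ∧ Filter.Tendsto (fun n => ‖b n‖) Filter.atTop Filter.atTop)) :
    Filter.Tendsto (fun n => ∫ x, (starRingEnd ℂ) (f x) * resc d (a n) (b n) f' x)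
      Filter.atTop (𝓝 0) := by
  rw [NormedAddCommGroup.tendsto_nhds_zero]
  intro ε hε
  set Nf : ℝ := (eLpNorm f 2 volume).toReal with hNfdef
  set Nf' : ℝ := (eLpNorm f' 2 volume).toReal with hNf'def
  have hNf : 0 ≤ Nf := ENNReal.toReal_nonneg
  have hNf' : 0 ≤ Nf' := ENNReal.toReal_nonneg
  set δ : ℝ := min 1 (ε / (4 * (Nf + Nf' + 2))) with hδdef
  have hδpos : 0 < δ := lt_min one_pos (by positivity)
  have hδ1 : δ ≤ 1 := min_le_left _ _
  have hδle : δ ≤ ε / (4 * (Nf + Nf' + 2)) := min_le_right _ _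
  obtain ⟨g, hgs, hgsub, hgc, hgmem⟩ :=
    hf.exists_hasCompactSupport_eLpNorm_sub_le (p := 2) (by norm_num)
      (ε := ENNReal.ofReal δ) (ENNReal.ofReal_pos.mpr hδpos).ne'
  obtain ⟨g', hgs', hgsub', hgc', hgmem'⟩ :=
    hf'.exists_hasCompactSupport_eLpNorm_sub_le (p := 2) (by norm_num)
      (ε := ENNReal.ofReal δ) (ENNReal.ofReal_pos.mpr hδpos).ne'
  set F : Lp ℂ 2 (volume : Measure (EuclideanSpace ℝ (Fin d))) := hf.toLp f with hFdef
  set G : Lp ℂ 2 (volume : Measure (EuclideanSpace ℝ (Fin d))) := hgmem.toLp g with hGdef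
  set F' : ℕ → Lp ℂ 2 (volume : Measure (EuclideanSpace ℝ (Fin d))) :=
    fun n => (memℒp_resc hf' (ha n) (b n)).toLp _ with hF'def
  set G' : ℕ → Lp ℂ 2 (volume : Measure (EuclideanSpace ℝ (Fin d))) :=
    fun n => (memℒp_resc hgmem' (ha n) (b n)).toLp _ with hG'def
  have hIn : ∀ n, ∫ x, (starRingEnd ℂ) (f x) * resc d (a n) (b n) f' x
      = (inner ℂ F (F' n) : ℂ) :=
    fun n => (inner_toLp_eq hf (memℒp_resc hf' (ha n) (b n))).symm
  have hdecomp : ∀ n, (inner ℂ F (F' n) : ℂ)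
      = inner ℂ (F - G) (F' n) + inner ℂ G (F' n - G' n) + inner ℂ G (G' n) := by
    intro n
    rw [inner_sub_left, inner_sub_right]
    ring
  have hFG : ‖F - G‖ ≤ δ := by
    rw [hFdef, hGdef, ← MemLp.toLp_sub hf hgmem, Lp.norm_toLp]
    exact ENNReal.toReal_le_of_le_ofReal hδpos.le hgsub
  have hFnorm : ‖F‖ = Nf := Lp.norm_toLp f hf
  have hF'n : ∀ n, ‖F' n‖ = Nf' := by
    intro n
    rw [hF'def]
    rw [norm_toLp_resc hf' (ha n) (b n), Lp.norm_toLp]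
  have hF'G' : ∀ n, ‖F' n - G' n‖ ≤ δ := by
    intro n
    have heq : F' n - G' n
        = (memℒp_resc (hf'.sub hgmem') (ha n) (b n)).toLp (resc d (a n) (b n) (f' - g')) := by
      rw [hF'def, hG'def]
      simp only [resc_sub]
      exact (MemLp.toLp_sub _ _).symm
    rw [heq, norm_toLp_resc (hf'.sub hgmem') (ha n) (b n), Lp.norm_toLp]
    exact ENNReal.toReal_le_of_le_ofReal hδpos.le hgsub'
  have hG : ‖G‖ ≤ Nf + 1 := by
    have h1 : ‖G‖ ≤ ‖F‖ + ‖F - G‖ := by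
      have := norm_sub_le F (F - G)
      rwa [sub_sub_cancel] at this
    linarith
  have hthird : ∀ᶠ n in Filter.atTop, ‖(inner ℂ G (G' n) : ℂ)‖ < ε/2 := by
    have hT := tendsto_compact hd hgc hgs hgc' hgs' ha hyp
    have hT2 := (NormedAddCommGroup.tendsto_nhds_zero.mp hT) (ε/2) (by positivity)
    filter_upwards [hT2] with n hn
    rw [hGdef, hG'def]
    rw [inner_toLp_eq hgmem (memℒp_resc hgmem' (ha n) (b n))]
    exact hn
  filter_upwards [hthird] with n hn
  calc ‖∫ x, (starRingEnd ℂ) (f x) * resc d (a n) (b n) f' x‖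
      = ‖(inner ℂ (F - G) (F' n) : ℂ) + inner ℂ G (F' n - G' n) + inner ℂ G (G' n)‖ := by
        rw [hIn n, hdecomp n]
    _ ≤ ‖(inner ℂ (F - G) (F' n) : ℂ)‖ + ‖(inner ℂ G (F' n - G' n) : ℂ)‖
          + ‖(inner ℂ G (G' n) : ℂ)‖ := norm_add₃_le
    _ ≤ ‖F - G‖ * ‖F' n‖ + ‖G‖ * ‖F' n - G' n‖ + ‖(inner ℂ G (G' n) : ℂ)‖ := by
        gcongr <;> exact norm_inner_le_norm _ _
    _ < ε := by
        have h1 : δ * (4 * (Nf + Nf' + 2)) ≤ ε :=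
          (le_div_iff₀ (by positivity)).mp hδle
        have h2 : ‖F - G‖ * ‖F' n‖ ≤ δ * Nf' := by
          rw [hF'n n]; exact mul_le_mul_of_nonneg_right hFG hNf'
        have h3 : ‖G‖ * ‖F' n - G' n‖ ≤ (Nf + 1) * δ := by
          apply mul_le_mul hG (hF'G' n) (norm_nonneg _) (by linarith)
        nlinarith [mul_nonneg hδpos.le hNf, mul_nonneg hδpos.le hNf']

theorem Lp_coeFn_sum {α E' : Type*} [MeasurableSpace α] {μ : Measure α}
    [NormedAddCommGroup E'] {ι : Type*} (s : Finset ι) (G : ι → Lp E' 2 μ) :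
    ⇑(∑ i ∈ s, G i) =ᵐ[μ] fun x => ∑ i ∈ s, G i x := by
  classical
  induction s using Finset.induction_on with
  | empty => simp only [Finset.sum_empty]; exact Lp.coeFn_zero E' 2 μ
  | @insert i s hni ih =>
    rw [Finset.sum_insert hni]
    filter_upwards [Lp.coeFn_add (G i) (∑ j ∈ s, G j), ih] with x h1 h2
    rw [h1, Pi.add_apply, h2, Finset.sum_insert hni]

end

end AlmOrth

open AlmOrth in
/-- Almost orthogonality in `L²(ℝ^d)`: if the scale-core pairs `(h^ℓ, κ^ℓ)`,
`ℓ = 1, …, L`, are pairwise orthogonal, then the squared `L²` norm of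
`∑_ℓ (h_n^ℓ)^{-d/2} φ^ℓ((· - κ_n^ℓ)/h_n^ℓ)` converges to `∑_ℓ ‖φ^ℓ‖²` as `n → ∞`. -/
theorem almost_orthogonality_L2 (d : ℕ) (hd : 1 ≤ d) (L : ℕ) (hL : 1 ≤ L)
    (φ : Fin L → EuclideanSpace ℝ (Fin d) → ℂ)
    (hφ : ∀ ℓ, MemLp (φ ℓ) 2 (volume : Measure (EuclideanSpace ℝ (Fin d))))
    (h : Fin L → ℕ → ℝ) (hpos : ∀ ℓ n, 0 < h ℓ n)
    (κ : Fin L → ℕ → EuclideanSpace ℝ (Fin d))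
    (horth : ∀ ℓ ℓ', ℓ ≠ ℓ' →
      Filter.Tendsto (fun n => |Real.log (h ℓ n / h ℓ' n)|)
        Filter.atTop Filter.atTop ∨
      ((∀ n, h ℓ n = h ℓ' n) ∧
        Filter.Tendsto (fun n => ‖κ ℓ n - κ ℓ' n‖ / h ℓ n)
          Filter.atTop Filter.atTop)) :
    Filter.Tendsto
      (fun n : ℕ =>
        ((eLpNorm
          (fun x : EuclideanSpace ℝ (Fin d) =>
            ∑ ℓ : Fin L,
              ((h ℓ n ^ (-(d : ℝ)/2) : ℝ) : ℂ) * φ ℓ ((h ℓ n)⁻¹ • (x - κ ℓ n)))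
          2 volume).toReal) ^ 2)
      Filter.atTop
      (𝓝 (∑ ℓ : Fin L, ((eLpNorm (φ ℓ) 2 volume).toReal) ^ 2)) := by
  classical
  have hmem : ∀ (n : ℕ) (ℓ : Fin L),
      MemLp (resc d (h ℓ n) (κ ℓ n) (φ ℓ)) 2 (volume : Measure (EuclideanSpace ℝ (Fin d))) :=
    fun n ℓ => memℒp_resc (hφ ℓ) (hpos ℓ n) _
  set F : ℕ → Fin L → Lp ℂ 2 (volume : Measure (EuclideanSpace ℝ (Fin d))) :=
    fun n ℓ => (hmem n ℓ).toLp _ with hFdef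
  have hrw : ∀ n, ((eLpNorm
        (fun x => ∑ ℓ : Fin L, resc d (h ℓ n) (κ ℓ n) (φ ℓ) x) 2 volume).toReal) ^ 2
      = ∑ ℓ : Fin L, ∑ ℓ' : Fin L, RCLike.re (inner ℂ (F n ℓ) (F n ℓ') : ℂ) := by
    intro n
    have key : (fun x => ∑ ℓ : Fin L, resc d (h ℓ n) (κ ℓ n) (φ ℓ) x)
        =ᵐ[volume] ⇑(∑ ℓ : Fin L, F n ℓ) := by
      have h2 := Lp_coeFn_sum Finset.univ (F n)
      have h3 : ∀ᵐ x ∂(volume : Measure (EuclideanSpace ℝ (Fin d))),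
          ∀ ℓ : Fin L, (F n ℓ : EuclideanSpace ℝ (Fin d) → ℂ) x
            = resc d (h ℓ n) (κ ℓ n) (φ ℓ) x :=
        (ae_all_iff).mpr fun ℓ => (hmem n ℓ).coeFn_toLp
      filter_upwards [h2, h3] with x hx2 hx3
      rw [hx2]
      exact Finset.sum_congr rfl fun ℓ _ => (hx3 ℓ).symm
    rw [eLpNorm_congr_ae key, ← Lp.norm_def, norm_sq_eq_re_inner (𝕜 := ℂ), sum_inner, map_sum]
    exact Finset.sum_congr rfl fun ℓ _ => by rw [inner_sum, map_sum]
  refine Filter.Tendsto.congr (fun n => (hrw n).symm) ?_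
  have hlim : (∑ ℓ : Fin L, ((eLpNorm (φ ℓ) 2 volume).toReal) ^ 2)
      = ∑ ℓ : Fin L, ∑ ℓ' : Fin L,
          (if ℓ' = ℓ then ((eLpNorm (φ ℓ) 2 volume).toReal) ^ 2 else 0) := by
    simp
  rw [hlim]
  apply tendsto_finset_sum
  intro ℓ _
  apply tendsto_finset_sum
  intro ℓ' _
  by_cases heq : ℓ' = ℓ
  · subst heq
    simp only [if_pos rfl]
    have hc : ∀ n, RCLike.re (inner ℂ (F n ℓ') (F n ℓ') : ℂ)
        = ((eLpNorm (φ ℓ') 2 volume).toReal) ^ 2 := by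
      intro n
      rw [hFdef]
      simp only
      rw [inner_toLp_resc_self (hφ ℓ') (hφ ℓ') (hpos ℓ' n) (κ ℓ' n),
        ← norm_sq_eq_re_inner (𝕜 := ℂ), Lp.norm_toLp]
    exact Filter.Tendsto.congr (fun n => (hc n).symm) tendsto_const_nhds
  · simp only [if_neg heq]
    have hne : ℓ ≠ ℓ' := fun he => heq he.symm
    have hinner : ∀ n, (inner ℂ (F n ℓ) (F n ℓ') : ℂ)
        = ∫ y, (starRingEnd ℂ) (φ ℓ y)
            * resc d (h ℓ' n / h ℓ n) ((h ℓ n)⁻¹ • (κ ℓ' n - κ ℓ n)) (φ ℓ') y := by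
      intro n
      rw [hFdef]
      simp only
      rw [inner_toLp_resc (hφ ℓ) (hφ ℓ') (hpos ℓ n) (hpos ℓ' n) (κ ℓ n) (κ ℓ' n)]
    have hyp' : Filter.Tendsto (fun n => |Real.log (h ℓ' n / h ℓ n)|)
          Filter.atTop Filter.atTop ∨
        ((∀ n, h ℓ' n / h ℓ n = 1) ∧
          Filter.Tendsto (fun n => ‖(h ℓ n)⁻¹ • (κ ℓ' n - κ ℓ n)‖)
            Filter.atTop Filter.atTop) := by
      rcases horth ℓ ℓ' hne with hcase | ⟨hcase, hcore⟩
      · left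
        apply hcase.congr
        intro n
        rw [Real.log_div (hpos ℓ n).ne' (hpos ℓ' n).ne',
          Real.log_div (hpos ℓ' n).ne' (hpos ℓ n).ne', abs_sub_comm]
      · right
        constructor
        · intro n
          rw [← hcase n, div_self (hpos ℓ n).ne']
        · apply hcore.congr
          intro n
          rw [norm_smul, norm_inv, Real.norm_eq_abs, abs_of_pos (hpos ℓ n),
            norm_sub_rev, div_eq_inv_mul]
    have hv := tendsto_inner_resc hd (hφ ℓ) (hφ ℓ')
      (a := fun n => h ℓ' n / h ℓ n) (fun n => div_pos (hpos ℓ' n) (hpos ℓ n))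
      (b := fun n => (h ℓ n)⁻¹ • (κ ℓ' n - κ ℓ n)) hyp'
    have hv2 : Filter.Tendsto (fun n => (inner ℂ (F n ℓ) (F n ℓ') : ℂ))
        Filter.atTop (𝓝 0) := hv.congr fun n => (hinner n).symm
    have := (RCLike.continuous_re.tendsto (0 : ℂ)).comp hv2
    simpa [Function.comp_def] using this
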